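/- Let m be a positive natural number and for each i ∈ Fin m let E i be a finite-dimensional real inner product space, f i : E i → ℝ a twice continuously differentiable function, and λ i a real number with Δ(f i) = (λ i)·(f i). Define g on the L² product space PiLp 2 E by g(x) = ∏_{i} f i (x i). Then Δg = (∑_{i} λ i)·g. -/

import Mathlib

/-- The Laplacian of a real-valued function on a finite-dimensional real inner
product space: the sum of the second directional derivatives along an
orthonormal basis. -/
noncomputable def laplacian {E : Type*} [NormedAddCommGroup E] [InnerProductSpace ℝ E]
    [FiniteDimensional ℝ E] (f : E → ℝ) (x : E) : ℝ :=
  ∑ i, fderiv ℝ (fun y => fderiv ℝ f y (stdOrthonormalBasis ℝ E i)) x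
      (stdOrthonormalBasis ℝ E i)

open scoped RealInnerProductSpace

section aux
variable {E : Type*} [NormedAddCommGroup E] [InnerProductSpace ℝ E] [FiniteDimensional ℝ E]

lemma sum_bilin_orthonormalBasis (B : E →L[ℝ] E →L[ℝ] ℝ) {ι κ : Type*} [Fintype ι] [Fintype κ]
    (b : OrthonormalBasis ι ℝ E) (c : OrthonormalBasis κ ℝ E) :
    ∑ i, B (b i) (b i) = ∑ j, B (c j) (c j) := by
  classical
  have expand : ∀ i, B (b i) (b i)
      = ∑ j, ∑ k, (c.repr (b i) j) * ((c.repr (b i) k) * B (c j) (c k)) := by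
    intro i
    conv_lhs => rw [← c.sum_repr (b i)]
    rw [map_sum]
    have e : ∀ k, (B (∑ j, c.repr (b i) j • c j)) (c.repr (b i) k • c k)
        = ∑ j, c.repr (b i) j * (c.repr (b i) k * B (c j) (c k)) := by
      intro k
      rw [map_smul, map_sum, ContinuousLinearMap.sum_apply, smul_eq_mul, Finset.mul_sum]
      exact Finset.sum_congr rfl fun j _ => by
        rw [map_smul, ContinuousLinearMap.smul_apply, smul_eq_mul]; ring
    simp_rw [e]
    exact Finset.sum_comm
  simp_rw [expand]
  rw [Finset.sum_comm]
  have : ∀ j, ∑ i, ∑ k, (c.repr (b i) j) * ((c.repr (b i) k) * B (c j) (c k))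
      = ∑ k, (∑ i, (c.repr (b i) j) * (c.repr (b i) k)) * B (c j) (c k) := by
    intro j
    rw [Finset.sum_comm]
    simp [Finset.sum_mul, mul_assoc]
  simp_rw [this]
  have parseval : ∀ j k : κ, (∑ i, (c.repr (b i) j) * (c.repr (b i) k)) = ⟪c j, c k⟫ := by
    intro j k
    have := b.sum_inner_mul_inner (c j) (c k)
    simp_rw [← this, c.repr_apply_apply]
    refine Finset.sum_congr rfl fun i _ => by rw [real_inner_comm (c k) (b i)]
  simp_rw [parseval]
  have horth : ∀ j k : κ, ⟪c j, c k⟫ = if j = k then (1:ℝ) else 0 := by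
    intro j k
    by_cases h : j = k
    · subst h; simp [real_inner_self_eq_norm_mul_norm, c.orthonormal.1 j]
    · simp [h, c.orthonormal.2 h]
  refine Finset.sum_congr rfl fun j _ => ?_
  rw [Finset.sum_eq_single j]
  · simp [horth]
  · intro k _ hk; simp [horth, Ne.symm hk]
  · simp

lemma fderiv_fderiv_apply' {f : E → ℝ} {x : E}
    (hf : DifferentiableAt ℝ (fderiv ℝ f) x) (v w : E) :
    fderiv ℝ (fun y => fderiv ℝ f y v) x w = fderiv ℝ (fderiv ℝ f) x w v := by
  have := fderiv_clm_apply (c := fderiv ℝ f) (u := fun _ => v) hf (differentiableAt_const v)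
  rw [show (fun y => fderiv ℝ f y v) = fun y => (fderiv ℝ f y) ((fun _ => v) y) from rfl, this]
  simp

lemma laplacian_eq_sum {f : E → ℝ} (hf : ContDiff ℝ 2 f) (x : E)
    {ι : Type*} [Fintype ι] (b : OrthonormalBasis ι ℝ E) :
    laplacian f x = ∑ i, fderiv ℝ (fun y => fderiv ℝ f y (b i)) x (b i) := by
  have hdiff : DifferentiableAt ℝ (fderiv ℝ f) x :=
    ((hf.fderiv_right (m := 1) (by norm_num)).differentiable one_ne_zero).differentiableAt
  unfold laplacian
  simp_rw [fderiv_fderiv_apply' hdiff]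
  exact sum_bilin_orthonormalBasis (fderiv ℝ (fderiv ℝ f) x) _ b

end aux


set_option maxHeartbeats 1000000 in
/-- The product of Laplacian eigenfunctions of `m` factors is a Laplacian
eigenfunction on the `L²` product space `PiLp 2 E`, whose eigenvalue is the sum
of the factor eigenvalues. -/
theorem laplacian_eigenfunction_pi
    (m : ℕ) (hm : 0 < m) (E : Fin m → Type*)
    [∀ i, NormedAddCommGroup (E i)] [∀ i, InnerProductSpace ℝ (E i)]
    [∀ i, FiniteDimensional ℝ (E i)]
    (f : ∀ i, E i → ℝ) (hf : ∀ i, ContDiff ℝ 2 (f i))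
    (lam : Fin m → ℝ)
    (heig : ∀ i, ∀ x : E i, laplacian (f i) x = lam i * f i x)
    (g : PiLp 2 E → ℝ) (hg : ∀ x : PiLp 2 E, g x = ∏ i, f i (x i)) :
    ∀ x : PiLp 2 E, laplacian g x = (∑ i, lam i) * g x := by
  classical
  intro x
  have hfel : ∀ i, Differentiable ℝ (f i) := fun i => (hf i).differentiable two_ne_zero
  have hgfun : g = fun y : PiLp 2 E => ∏ i, f i (y i) := funext hg
  have hproj : ∀ i, ContDiff ℝ 2 fun y : PiLp 2 E => f i (y i) := fun i =>
    (hf i).comp (PiLp.proj (𝕜 := ℝ) 2 E i).contDiff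
  have hgc : ContDiff ℝ 2 g := by
    rw [hgfun]; exact contDiff_prod fun i _ => hproj i
  set bE := Pi.orthonormalBasis (fun i => stdOrthonormalBasis ℝ (E i)) with hbE
  have hDg : ∀ y : PiLp 2 E, HasFDerivAt g
      (∑ k, (∏ j ∈ Finset.univ.erase k, f j (y j)) •
        ((fderiv ℝ (f k) (y k)).comp (PiLp.proj (𝕜 := ℝ) 2 E k))) y := by
    intro y
    rw [hgfun]
    exact HasFDerivAt.finset_prod fun k _ =>
      ((hfel k (y k)).hasFDerivAt.comp y (PiLp.proj (𝕜 := ℝ) 2 E k).hasFDerivAt)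
  have hfd1 : ∀ (y : PiLp 2 E) (i : Fin m) (e : E i),
      fderiv ℝ g y ((WithLp.equiv 2 _).symm (Pi.single i e))
        = (∏ j ∈ Finset.univ.erase i, f j (y j)) * fderiv ℝ (f i) (y i) e := by
    intro y i e
    rw [(hDg y).fderiv, ContinuousLinearMap.sum_apply]
    rw [Finset.sum_eq_single i]
    · simp [WithLp.equiv_symm_apply, PiLp.toLp_apply]
    · intro k _ hk
      simp [WithLp.equiv_symm_apply, PiLp.toLp_apply, Pi.single_eq_of_ne hk]
    · simp
  have hfd2 : ∀ (i : Fin m) (e : E i),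
      fderiv ℝ (fun y => fderiv ℝ g y ((WithLp.equiv 2 _).symm (Pi.single i e))) x
          ((WithLp.equiv 2 _).symm (Pi.single i e))
        = (∏ j ∈ Finset.univ.erase i, f j (x j)) *
            fderiv ℝ (fun z => fderiv ℝ (f i) z e) (x i) e := by
    intro i e
    have hfun : (fun y => fderiv ℝ g y ((WithLp.equiv 2 _).symm (Pi.single i e)))
        = fun y => (∏ j ∈ Finset.univ.erase i, f j (y j)) * fderiv ℝ (f i) (y i) e :=
      funext fun y => hfd1 y i e
    rw [hfun]
    have hA : HasFDerivAt (fun y : PiLp 2 E => ∏ j ∈ Finset.univ.erase i, f j (y j))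
        (∑ k ∈ Finset.univ.erase i, (∏ j ∈ (Finset.univ.erase i).erase k, f j (x j)) •
          ((fderiv ℝ (f k) (x k)).comp (PiLp.proj (𝕜 := ℝ) 2 E k))) x :=
      HasFDerivAt.finset_prod fun k _ =>
        ((hfel k (x k)).hasFDerivAt.comp x (PiLp.proj (𝕜 := ℝ) 2 E k).hasFDerivAt)
    have hC1 : ContDiff ℝ 1 (fderiv ℝ (f i)) := (hf i).fderiv_right (m := 1) (by norm_num)
    have hBz : DifferentiableAt ℝ (fun z => fderiv ℝ (f i) z e) (x i) :=
      ((hC1.differentiable one_ne_zero) (x i)).clm_apply (differentiableAt_const e)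
    have hB : HasFDerivAt (fun y : PiLp 2 E => fderiv ℝ (f i) (y i) e)
        ((fderiv ℝ (fun z => fderiv ℝ (f i) z e) (x i)).comp (PiLp.proj (𝕜 := ℝ) 2 E i)) x :=
      by have := hBz.hasFDerivAt.comp x (PiLp.proj (𝕜 := ℝ) 2 E i).hasFDerivAt; exact this
    rw [(hA.mul hB : HasFDerivAt (fun y => _ * _) _ x).fderiv]
    rw [ContinuousLinearMap.add_apply, ContinuousLinearMap.smul_apply,
      ContinuousLinearMap.smul_apply, ContinuousLinearMap.sum_apply]
    rw [Finset.sum_eq_zero (fun k hk => ?_)]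
    · simp [WithLp.equiv_symm_apply, PiLp.toLp_apply]
    · have hki : k ≠ i := Finset.ne_of_mem_erase hk
      simp [WithLp.equiv_symm_apply, PiLp.toLp_apply, Pi.single_eq_of_ne hki]
  rw [laplacian_eq_sum hgc x bE]
  have hbe : ∀ (s : Σ i, Fin (Module.finrank ℝ (E i))),
      bE s = (WithLp.equiv 2 _).symm (Pi.single s.1 (stdOrthonormalBasis ℝ (E s.1) s.2)) :=
    fun s => Pi.orthonormalBasis_apply _ s
  rw [← Finset.univ_sigma_univ, Finset.sum_sigma]
  have key : ∀ i : Fin m, ∑ j, fderiv ℝ (fun y => fderiv ℝ g y (bE ⟨i, j⟩)) x (bE ⟨i, j⟩)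
      = lam i * g x := by
    intro i
    have : ∀ j, fderiv ℝ (fun y => fderiv ℝ g y (bE ⟨i, j⟩)) x (bE ⟨i, j⟩)
        = (∏ l ∈ Finset.univ.erase i, f l (x l)) *
            fderiv ℝ (fun z => fderiv ℝ (f i) z (stdOrthonormalBasis ℝ (E i) j)) (x i)
              (stdOrthonormalBasis ℝ (E i) j) := by
      intro j
      rw [hbe ⟨i, j⟩]
      exact hfd2 i (stdOrthonormalBasis ℝ (E i) j)
    simp_rw [this]
    rw [← Finset.mul_sum]
    have hlap : (∑ j, fderiv ℝ (fun z => fderiv ℝ (f i) z (stdOrthonormalBasis ℝ (E i) j)) (x i)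
        (stdOrthonormalBasis ℝ (E i) j)) = laplacian (f i) (x i) := rfl
    rw [hlap, heig i (x i), hg x, ← Finset.prod_erase_mul Finset.univ _ (Finset.mem_univ i)]
    ring
  simp_rw [key]
  rw [← Finset.sum_mul]
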